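/- Let f be a probability density on ℝ, let σ > 0, and define f_0 = f and f_{j+1} = f − (K_σ f_j − f_j) for j ≥ 0. Then for every k ∈ ℕ: (1) f_k(x) = Σ_{i=0}^k binom(k+1, i+1) (−1)^i (K_σ^i f)(x) for all x ∈ ℝ; (2) ∫_ℝ f_k(x) dx = 1; (3) if in addition f(x) ≤ M ψ(x) for all x and some M > 0, then (K_σ^i f)(x) ≤ M/√π for all i ∈ ℕ and all x, and |f_k(x)| ≤ (2^{k+1} − 1) M/√π for all x. -/

import Mathlib

open MeasureTheory
open scoped Convolution

/-- The Gaussian kernel `ψ(x) = π^{-1/2} exp(-x²)`. -/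
noncomputable def gaussK (x : ℝ) : ℝ := (Real.sqrt Real.pi)⁻¹ * Real.exp (-x ^ 2)

/-- The scaled Gaussian kernel `ψ_σ(x) = σ⁻¹ ψ(x/σ)`. -/
noncomputable def gaussKs (σ x : ℝ) : ℝ := σ⁻¹ * gaussK (x / σ)

/-- Convolution with `ψ_σ` : `K_σ f`. -/
noncomputable def convK (σ : ℝ) (f : ℝ → ℝ) : ℝ → ℝ := fun x => ∫ u, f u * gaussKs σ (x - u)

/-- `i`-fold application of `K_σ`, with `K_σ^0 f = f`. -/
noncomputable def convKiter (σ : ℝ) (f : ℝ → ℝ) : ℕ → ℝ → ℝ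
  | 0 => f
  | i + 1 => convK σ (convKiter σ f i)

/-- The iterates `f_0 = f`, `f_{j+1} = f - (K_σ f_j - f_j)`. -/
noncomputable def iterF (σ : ℝ) (f : ℝ → ℝ) : ℕ → ℝ → ℝ
  | 0 => f
  | j + 1 => fun x => f x - (convK σ (iterF σ f j) x - iterF σ f j x)

/-- `J_{σ,k} = {x : f_k(x) > f(x)/2}`. -/
def Jset (σ : ℝ) (f : ℝ → ℝ) (k : ℕ) : Set ℝ := {x | f x / 2 < iterF σ f k x}

-- `g_k = f_k 1_{J_{σ,k}} + (f/2) 1_{J_{σ,k}^c}`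
open Classical in
noncomputable def gFun (σ : ℝ) (f : ℝ → ℝ) (k : ℕ) : ℝ → ℝ :=
  fun x => if x ∈ Jset σ f k then iterF σ f k x else f x / 2

/-- `h_k = g_k / ∫ g_k`. -/
noncomputable def hFun (σ : ℝ) (f : ℝ → ℝ) (k : ℕ) : ℝ → ℝ :=
  fun x => gFun σ f k x / ∫ u, gFun σ f k u

lemma gaussK_nonneg (x : ℝ) : 0 ≤ gaussK x :=
  mul_nonneg (inv_nonneg.2 (Real.sqrt_nonneg _)) (Real.exp_pos _).le

lemma gaussK_le (x : ℝ) : gaussK x ≤ (Real.sqrt Real.pi)⁻¹ := by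
  have h1 : Real.exp (-x ^ 2) ≤ 1 := by
    rw [Real.exp_le_one_iff]; nlinarith [sq_nonneg x]
  calc gaussK x ≤ (Real.sqrt Real.pi)⁻¹ * 1 :=
        mul_le_mul_of_nonneg_left h1 (inv_nonneg.2 (Real.sqrt_nonneg _))
    _ = _ := mul_one _

lemma integrable_gaussK : Integrable gaussK := by
  have h : Integrable (fun x : ℝ => Real.exp (-1 * x ^ 2)) := integrable_exp_neg_mul_sq one_pos
  have := h.const_mul (Real.sqrt Real.pi)⁻¹
  exact (by simpa [neg_mul, one_mul] using this :
    Integrable (fun x : ℝ => (Real.sqrt Real.pi)⁻¹ * Real.exp (-x ^ 2)))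

lemma integral_gaussK : (∫ x, gaussK x) = 1 := by
  have h := integral_gaussian 1
  simp only [neg_mul, one_mul, div_one] at h
  have : (∫ x, gaussK x) = (Real.sqrt Real.pi)⁻¹ * ∫ x, Real.exp (-x ^ 2) := by
    simp only [gaussK]; rw [integral_const_mul]
  rw [this, h, inv_mul_cancel₀]
  exact Real.sqrt_ne_zero'.2 Real.pi_pos

lemma continuous_gaussK : Continuous gaussK := by
  unfold gaussK; continuity

lemma gaussKs_nonneg {σ : ℝ} (hσ : 0 < σ) (x : ℝ) : 0 ≤ gaussKs σ x :=
  mul_nonneg (inv_nonneg.2 hσ.le) (gaussK_nonneg _)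

lemma gaussKs_le {σ : ℝ} (hσ : 0 < σ) (x : ℝ) : gaussKs σ x ≤ σ⁻¹ * (Real.sqrt Real.pi)⁻¹ :=
  mul_le_mul_of_nonneg_left (gaussK_le _) (inv_nonneg.2 hσ.le)

lemma continuous_gaussKs (σ : ℝ) : Continuous (gaussKs σ) :=
  continuous_const.mul (continuous_gaussK.comp (continuous_id.div_const σ))

lemma integrable_gaussKs {σ : ℝ} (hσ : 0 < σ) : Integrable (gaussKs σ) :=
  (integrable_gaussK.comp_div hσ.ne').const_mul σ⁻¹

lemma integral_gaussKs {σ : ℝ} (hσ : 0 < σ) : (∫ x, gaussKs σ x) = 1 := by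
  unfold gaussKs
  rw [integral_const_mul, Measure.integral_comp_div gaussK σ, integral_gaussK,
    abs_of_pos hσ]
  simp [inv_mul_cancel₀ hσ.ne']

lemma convK_eq (σ : ℝ) (g : ℝ → ℝ) :
    convK σ g = g ⋆[ContinuousLinearMap.mul ℝ ℝ] gaussKs σ := rfl

lemma convK_integrable {σ : ℝ} {g : ℝ → ℝ} (hσ : 0 < σ) (hg : Integrable g) :
    Integrable (convK σ g) := by
  rw [convK_eq]; exact hg.integrable_convolution _ (integrable_gaussKs hσ)

lemma convK_integral {σ : ℝ} {g : ℝ → ℝ} (hσ : 0 < σ) (hg : Integrable g) :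
    (∫ x, convK σ g x) = ∫ x, g x := by
  rw [convK_eq, integral_convolution _ hg (integrable_gaussKs hσ), integral_gaussKs hσ]
  simp

lemma convK_integrand_integrable {σ : ℝ} {g : ℝ → ℝ} (hσ : 0 < σ) (hg : Integrable g)
    (x : ℝ) : Integrable (fun u => g u * gaussKs σ (x - u)) := by
  have hm : AEStronglyMeasurable (fun u => gaussKs σ (x - u)) volume :=
    ((continuous_gaussKs σ).comp (continuous_const.sub continuous_id)).aestronglyMeasurable
  have hb : ∃ C, ∀ u : ℝ, ‖gaussKs σ (x - u)‖ ≤ C :=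
    ⟨σ⁻¹ * (Real.sqrt Real.pi)⁻¹, fun u => by
      rw [Real.norm_eq_abs, abs_of_nonneg (gaussKs_nonneg hσ _)]; exact gaussKs_le hσ _⟩
  have := hg.bdd_mul hm (Filter.Eventually.of_forall hb.choose_spec)
  simpa [mul_comm] using this

lemma integral_gaussKs_shift {σ : ℝ} (hσ : 0 < σ) (x : ℝ) :
    (∫ u, gaussKs σ (x - u)) = 1 := by
  rw [integral_sub_left_eq_self (gaussKs σ) volume x, integral_gaussKs hσ]

lemma convK_abs_le {σ : ℝ} {g : ℝ → ℝ} {B : ℝ} (hσ : 0 < σ) (hg : Integrable g)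
    (hB : ∀ u, |g u| ≤ B) (x : ℝ) : |convK σ g x| ≤ B := by
  have h1 : |convK σ g x| ≤ ∫ u, |g u| * |gaussKs σ (x - u)| := by
    simpa [convK, Real.norm_eq_abs, abs_mul] using
      norm_integral_le_integral_norm (μ := volume) (fun u => g u * gaussKs σ (x - u))
  have hmaj : Integrable (fun u => B * gaussKs σ (x - u)) :=
    ((integrable_gaussKs hσ).comp_sub_left x).const_mul B
  have h2 : (∫ u, |g u| * |gaussKs σ (x - u)|) ≤ ∫ u, B * gaussKs σ (x - u) := by
    refine integral_mono_of_nonneg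
      (Filter.Eventually.of_forall fun u => mul_nonneg (abs_nonneg _) (abs_nonneg _))
      hmaj (Filter.Eventually.of_forall fun u => ?_)
    dsimp only
    rw [abs_of_nonneg (gaussKs_nonneg hσ _)]
    exact mul_le_mul_of_nonneg_right (hB u) (gaussKs_nonneg hσ _)
  have h3 : (∫ u, B * gaussKs σ (x - u)) = B := by
    rw [integral_const_mul, integral_gaussKs_shift hσ, mul_one]
  linarith

lemma convK_nonneg {σ : ℝ} {g : ℝ → ℝ} (hσ : 0 < σ) (hg : ∀ u, 0 ≤ g u) (x : ℝ) :
    0 ≤ convK σ g x :=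
  integral_nonneg fun u => mul_nonneg (hg u) (gaussKs_nonneg hσ _)

/-- Lemma 12: (1) `f_k = Σ_{i=0}^k C(k+1,i+1)(−1)^i K_σ^i f`;
(2) `∫ f_k = 1`; (3) if `f ≤ M ψ` then `K_σ^i f ≤ M/√π` and `|f_k| ≤ (2^{k+1}−1) M/√π`. -/
theorem stmt15 (f : ℝ → ℝ) (hf0 : ∀ x, 0 ≤ f x) (hfi : Integrable f)
    (hf1 : (∫ x, f x) = 1) (σ : ℝ) (hσ : 0 < σ) :
    (∀ k : ℕ, ∀ x : ℝ, iterF σ f k x =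
        ∑ i ∈ Finset.range (k + 1),
          ((k + 1).choose (i + 1) : ℝ) * (-1) ^ i * convKiter σ f i x) ∧
    (∀ k : ℕ, (∫ x, iterF σ f k x) = 1) ∧
    (∀ M : ℝ, 0 < M → (∀ x, f x ≤ M * gaussK x) →
      (∀ i : ℕ, ∀ x : ℝ, convKiter σ f i x ≤ M / Real.sqrt Real.pi) ∧
      (∀ k : ℕ, ∀ x : ℝ,
        |iterF σ f k x| ≤ (2 ^ (k + 1) - 1) * M / Real.sqrt Real.pi)) := by
  -- integrability of the iterates
  have hKi : ∀ i : ℕ, Integrable (convKiter σ f i) := by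
    intro i; induction i with
    | zero => exact hfi
    | succ i ih => exact convK_integrable hσ ih
  have hFi : ∀ k : ℕ, Integrable (iterF σ f k) := by
    intro k; induction k with
    | zero => exact hfi
    | succ k ih =>
      have hg : Integrable (fun x => convK σ (iterF σ f k) x - iterF σ f k x) :=
        (convK_integrable hσ ih).sub ih
      have := hfi.sub hg
      simpa [iterF, Pi.sub_def] using this
  -- part (1)
  have h1 : ∀ k : ℕ, ∀ x : ℝ, iterF σ f k x =
      ∑ i ∈ Finset.range (k + 1),
        ((k + 1).choose (i + 1) : ℝ) * (-1) ^ i * convKiter σ f i x := by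
    intro k; induction k with
    | zero => intro x; simp [iterF, convKiter]
    | succ k ih =>
      intro x
      have hKfk : convK σ (iterF σ f k) x =
          ∑ i ∈ Finset.range (k + 1),
            ((k + 1).choose (i + 1) : ℝ) * (-1) ^ i * convKiter σ f (i + 1) x := by
        have heq : iterF σ f k = fun u => ∑ i ∈ Finset.range (k + 1),
            ((k + 1).choose (i + 1) : ℝ) * (-1) ^ i * convKiter σ f i u := funext ih
        show (∫ u, iterF σ f k u * gaussKs σ (x - u)) = _
        rw [heq]
        have : (∫ u, (∑ i ∈ Finset.range (k + 1),
            ((k + 1).choose (i + 1) : ℝ) * (-1) ^ i * convKiter σ f i u) * gaussKs σ (x - u))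
            = ∑ i ∈ Finset.range (k + 1), ∫ u,
              ((k + 1).choose (i + 1) : ℝ) * (-1) ^ i * (convKiter σ f i u * gaussKs σ (x - u)) := by
          rw [← integral_finset_sum]
          · congr 1; funext u; rw [Finset.sum_mul]; congr 1; funext i; ring
          · intro i _
            exact ((convK_integrand_integrable hσ (hKi i) x).const_mul _)
        rw [this]
        refine Finset.sum_congr rfl fun i _ => ?_
        rw [integral_const_mul]
        rfl
      show f x - (convK σ (iterF σ f k) x - iterF σ f k x) = _
      rw [hKfk, ih x]
      -- binomial juggling
      have hsplit : ∀ i ∈ Finset.range (k + 2),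
          ((k + 2).choose (i + 1) : ℝ) * (-1) ^ i * convKiter σ f i x =
          ((k + 1).choose i : ℝ) * (-1) ^ i * convKiter σ f i x +
          ((k + 1).choose (i + 1) : ℝ) * (-1) ^ i * convKiter σ f i x := by
        intro i _
        have : (k + 2).choose (i + 1) = (k + 1).choose i + (k + 1).choose (i + 1) :=
          Nat.choose_succ_succ (k + 1) i
        rw [this]; push_cast; ring
      rw [Finset.sum_congr rfl hsplit, Finset.sum_add_distrib]
      have hA : ∑ i ∈ Finset.range (k + 2),
          ((k + 1).choose i : ℝ) * (-1) ^ i * convKiter σ f i x =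
          f x - ∑ i ∈ Finset.range (k + 1),
            ((k + 1).choose (i + 1) : ℝ) * (-1) ^ i * convKiter σ f (i + 1) x := by
        rw [Finset.sum_range_succ' (fun i => ((k + 1).choose i : ℝ) * (-1) ^ i * convKiter σ f i x) (k + 1)]
        have h0 : convKiter σ f 0 x = f x := rfl
        simp only [Nat.choose_zero_right, Nat.cast_one, pow_zero, one_mul, mul_one, h0]
        have hneg : ∑ i ∈ Finset.range (k + 1),
            ((k + 1).choose (i + 1) : ℝ) * (-1) ^ (i + 1) * convKiter σ f (i + 1) x =
            -∑ i ∈ Finset.range (k + 1),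
              ((k + 1).choose (i + 1) : ℝ) * (-1) ^ i * convKiter σ f (i + 1) x := by
          rw [← Finset.sum_neg_distrib]
          exact Finset.sum_congr rfl fun i _ => by ring
        rw [hneg]; ring
      have hB : ∑ i ∈ Finset.range (k + 2),
          ((k + 1).choose (i + 1) : ℝ) * (-1) ^ i * convKiter σ f i x =
          ∑ i ∈ Finset.range (k + 1),
            ((k + 1).choose (i + 1) : ℝ) * (-1) ^ i * convKiter σ f i x := by
        rw [Finset.sum_range_succ]
        simp [Nat.choose_eq_zero_of_lt (by omega : k + 1 < k + 2)]
      rw [hA, hB]; ring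
  refine ⟨h1, ?_, ?_⟩
  · -- part (2)
    intro k; induction k with
    | zero => exact hf1
    | succ k ih =>
      have : (∫ x, iterF σ f (k + 1) x) =
          (∫ x, f x) - ((∫ x, convK σ (iterF σ f k) x) - ∫ x, iterF σ f k x) := by
        have hg : Integrable (fun x => convK σ (iterF σ f k) x - iterF σ f k x) :=
          (convK_integrable hσ (hFi k)).sub (hFi k)
        show (∫ x, f x - (convK σ (iterF σ f k) x - iterF σ f k x)) = _
        rw [integral_sub hfi hg, integral_sub (convK_integrable hσ (hFi k)) (hFi k)]
      rw [this, hf1, convK_integral hσ (hFi k), ih]; ring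
  · -- part (3)
    intro M hM hfM
    have hπ : 0 < Real.sqrt Real.pi := Real.sqrt_pos.2 Real.pi_pos
    have hB0 : 0 ≤ M / Real.sqrt Real.pi := div_nonneg hM.le hπ.le
    have hK : ∀ i : ℕ, ∀ x : ℝ, 0 ≤ convKiter σ f i x ∧
        convKiter σ f i x ≤ M / Real.sqrt Real.pi := by
      intro i; induction i with
      | zero =>
        intro x
        refine ⟨hf0 x, (hfM x).trans ?_⟩
        rw [div_eq_mul_inv]
        exact mul_le_mul_of_nonneg_left (gaussK_le x) hM.le
      | succ i ih =>
        intro x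
        constructor
        · exact convK_nonneg hσ (fun u => (ih u).1) x
        · have := convK_abs_le hσ (hKi i)
            (fun u => by rw [abs_of_nonneg (ih u).1]; exact (ih u).2) x
          exact (le_abs_self _).trans this
    refine ⟨fun i x => (hK i x).2, ?_⟩
    intro k; induction k with
    | zero =>
      intro x
      show |f x| ≤ _
      rw [abs_of_nonneg (hf0 x)]
      calc f x ≤ M / Real.sqrt Real.pi := (hK 0 x).2
        _ = (2 ^ (0 + 1) - 1) * M / Real.sqrt Real.pi := by norm_num
    | succ k ih =>
      intro x
      have hKb : |convK σ (iterF σ f k) x| ≤ (2 ^ (k + 1) - 1) * M / Real.sqrt Real.pi :=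
        convK_abs_le hσ (hFi k) ih x
      have hfb : |f x| ≤ M / Real.sqrt Real.pi := by
        rw [abs_of_nonneg (hf0 x)]; exact (hK 0 x).2
      have hfk : |iterF σ f k x| ≤ (2 ^ (k + 1) - 1) * M / Real.sqrt Real.pi := ih x
      have : |iterF σ f (k + 1) x| ≤ |f x| + (|convK σ (iterF σ f k) x| + |iterF σ f k x|) := by
        show |f x - (convK σ (iterF σ f k) x - iterF σ f k x)| ≤ _
        exact (abs_sub _ _).trans (by gcongr; exact abs_sub _ _)
      have hpow : ((2 : ℝ) ^ (k + 1 + 1) - 1) * M / Real.sqrt Real.pi =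
          M / Real.sqrt Real.pi + ((2 ^ (k + 1) - 1) * M / Real.sqrt Real.pi +
            (2 ^ (k + 1) - 1) * M / Real.sqrt Real.pi) := by
        field_simp; ring
      rw [hpow]
      linarith
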